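/- Lower bound forcing p ≥ 2/3 in the bilinear Heisenberg Kakeya estimate: if for some p > 0 and all δ ∈ (0,1) the inequality ∫_{ℝ³}(Σ_{T₁∈𝒯₁}χ_{T₁})^p(Σ_{T₂∈𝒯₂}χ_{T₂})^p ≤ C δ^4((#𝒯₁)^p(#𝒯₂)^p + #𝒯₁ + #𝒯₂) holds for all transversal pairs of families of Heisenberg δ-tubes, and there exist families 𝒯₁, 𝒯₂ with #𝒯₁ = #𝒯₂ ∼ δ⁻³ such that each Σ_{T_j}χ_{T_j} ≥ c·χ_{B} on a fixed ball B of positive measure, then δ^{4-6p} ≳ 1 for all small δ, hence p ≥ 2/3. -/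

import Mathlib

open MeasureTheory

/-- Heisenberg group multiplication on ℝ³. -/
noncomputable def hMul (p q : ℝ × ℝ × ℝ) : ℝ × ℝ × ℝ :=
  (p.1 + q.1, p.2.1 + q.2.1, p.2.2 + q.2.2 + (p.1 * q.2.1 - q.1 * p.2.1) / 2)

/-- Heisenberg group inverse. -/
def hInv (p : ℝ × ℝ × ℝ) : ℝ × ℝ × ℝ := (-p.1, -p.2.1, -p.2.2)

/-- The Korányi gauge. -/
noncomputable def hNorm (p : ℝ × ℝ × ℝ) : ℝ :=
  ((p.1 ^ 2 + p.2.1 ^ 2) ^ 2 + 16 * p.2.2 ^ 2) ^ ((1 : ℝ) / 4)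

/-- The Korányi metric. -/
noncomputable def hDist (p q : ℝ × ℝ × ℝ) : ℝ := hNorm (hMul (hInv q) p)

/-- The Heisenberg δ-tube centred at p with horizontal direction (a,b,0). -/
noncomputable def hTube (δ : ℝ) (p : ℝ × ℝ × ℝ) (a b : ℝ) : Set (ℝ × ℝ × ℝ) :=
  {q | ∃ s ∈ Set.Icc (-(1 / 2) : ℝ) (1 / 2), hDist q (hMul p (s * a, s * b, 0)) ≤ δ}

/-- A tube datum is a centre together with a horizontal direction. -/
abbrev TubeData := (ℝ × ℝ × ℝ) × (ℝ × ℝ)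

/-- The indicator counting function of a family of Heisenberg δ-tubes. -/
noncomputable def tubeSum (δ : ℝ) (𝒯 : Finset TubeData) (x : ℝ × ℝ × ℝ) : ℝ :=
  ∑ T ∈ 𝒯, Set.indicator (hTube δ T.1 T.2.1 T.2.2) (fun _ => (1 : ℝ)) x

/-- components of the Korányi ball membership. -/
lemma hNorm_le_bounds (w : ℝ × ℝ × ℝ) {δ : ℝ} (hδ : 0 < δ) (hδ1 : δ ≤ 1)
    (h : hNorm w ≤ δ) : w.1 ^ 2 ≤ 1 ∧ w.2.1 ^ 2 ≤ 1 ∧ w.2.2 ^ 2 ≤ 1 := by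
  unfold hNorm at h
  set X : ℝ := (w.1 ^ 2 + w.2.1 ^ 2) ^ 2 + 16 * w.2.2 ^ 2 with hXdef
  have hX0 : (0:ℝ) ≤ X := by positivity
  have h4 : X ≤ δ ^ 4 := by
    have h' := pow_le_pow_left₀ (Real.rpow_nonneg hX0 _) h 4
    rw [← Real.rpow_natCast (X ^ ((1:ℝ)/4)) 4, ← Real.rpow_mul hX0] at h'
    norm_num at h'
    exact h'
  have hδ4 : δ ^ 4 ≤ 1 := pow_le_one₀ hδ.le hδ1
  have hX1 : X ≤ 1 := h4.trans hδ4
  have hsum : w.1 ^ 2 + w.2.1 ^ 2 ≤ 1 := by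
    nlinarith [sq_nonneg (w.1 ^ 2 + w.2.1 ^ 2 - 1), sq_nonneg w.2.2,
      sq_nonneg (w.1 ^ 2 + w.2.1 ^ 2)]
  refine ⟨by nlinarith [sq_nonneg w.2.1], by nlinarith [sq_nonneg w.1], ?_⟩
  nlinarith [sq_nonneg (w.1 ^ 2 + w.2.1 ^ 2)]


/-- Scalar coordinate bounds for points of a tube. -/

private lemma key_bound1 (x y z : ℝ) (hx : 0 ≤ x) (hy : 0 ≤ y) (hz : 0 ≤ z) :
    x + 2 ≤ (x + y + z + 3) ^ 2 := by
  nlinarith [mul_nonneg hx hy, mul_nonneg hx hz, mul_nonneg hy hz]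

private lemma key_bound2 (x y z : ℝ) (hx : 0 ≤ x) (hy : 0 ≤ y) (hz : 0 ≤ z) :
    y + 2 ≤ (x + y + z + 3) ^ 2 := by
  nlinarith [mul_nonneg hx hy, mul_nonneg hx hz, mul_nonneg hy hz]

private lemma key_bound3 (x y z : ℝ) (hx : 0 ≤ x) (hy : 0 ≤ y) (hz : 0 ≤ z) :
    1 + z + (x + y)/2 + ((x+1)*(y+2) + (x+2)*(y+1))/2 ≤ (x + y + z + 3) ^ 2 := by
  nlinarith [mul_nonneg hx hy, mul_nonneg hx hz, mul_nonneg hy hz]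

set_option maxHeartbeats 1000000 in
lemma coord_bounds (P1 P2 P3 s a b q1 q2 q3 : ℝ)
    (hs1 : -(1/2) ≤ s) (hs2 : s ≤ 1/2) (ha2 : a ^ 2 ≤ 1) (hb2 : b ^ 2 ≤ 1)
    (h1 : (q1 - (P1 + s * a)) ^ 2 ≤ 1) (h2 : (q2 - (P2 + s * b)) ^ 2 ≤ 1)
    (h3 : (q3 - (P3 + (P1 * (s * b) - s * a * P2) / 2)
        + (-(P1 + s * a) * q2 + q1 * (P2 + s * b)) / 2) ^ 2 ≤ 1) :
    |q1| ≤ (|P1| + |P2| + |P3| + 3) ^ 2 ∧ |q2| ≤ (|P1| + |P2| + |P3| + 3) ^ 2 ∧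
      |q3| ≤ (|P1| + |P2| + |P3| + 3) ^ 2 := by
  have hA0 : 0 ≤ |P1| := abs_nonneg _
  have hB0 : 0 ≤ |P2| := abs_nonneg _
  have hC0 : 0 ≤ |P3| := abs_nonneg _
  have hs12 : |s| ≤ 1/2 := abs_le.mpr ⟨hs1, hs2⟩
  have ha1 : |a| ≤ 1 := by rw [← sq_le_one_iff_abs_le_one]; exact ha2
  have hb1 : |b| ≤ 1 := by rw [← sq_le_one_iff_abs_le_one]; exact hb2
  have hsa : |s * a| ≤ 1 := by
    rw [abs_mul]; nlinarith [abs_nonneg s, abs_nonneg a]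
  have hsb : |s * b| ≤ 1 := by
    rw [abs_mul]; nlinarith [abs_nonneg s, abs_nonneg b]
  obtain ⟨hu1, hu2⟩ := abs_le.mp ((sq_le_one_iff_abs_le_one _).mp h1)
  obtain ⟨hv1, hv2⟩ := abs_le.mp ((sq_le_one_iff_abs_le_one _).mp h2)
  obtain ⟨hz1, hz2⟩ := abs_le.mp ((sq_le_one_iff_abs_le_one _).mp h3)
  obtain ⟨hsa1, hsa2⟩ := abs_le.mp hsa
  obtain ⟨hsb1, hsb2⟩ := abs_le.mp hsb
  have hP1a := le_abs_self P1
  have hP1b := neg_abs_le P1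
  have hP2a := le_abs_self P2
  have hP2b := neg_abs_le P2
  have hP3a := le_abs_self P3
  have hP3b := neg_abs_le P3
  have hq1 : |q1| ≤ |P1| + 2 := abs_le.mpr ⟨by linarith, by linarith⟩
  have hq2 : |q2| ≤ |P2| + 2 := abs_le.mpr ⟨by linarith, by linarith⟩
  have hm1 : |P1 + s * a| ≤ |P1| + 1 := abs_le.mpr ⟨by linarith, by linarith⟩
  have hm2 : |P2 + s * b| ≤ |P2| + 1 := abs_le.mpr ⟨by linarith, by linarith⟩
  have hprod1 : |(P1 + s * a) * q2| ≤ (|P1| + 1) * (|P2| + 2) := by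
    rw [abs_mul]; exact mul_le_mul hm1 hq2 (abs_nonneg _) (by linarith)
  have hprod2 : |q1 * (P2 + s * b)| ≤ (|P1| + 2) * (|P2| + 1) := by
    rw [abs_mul]; exact mul_le_mul hq1 hm2 (abs_nonneg _) (by linarith)
  have hprod3 : |P1 * (s * b)| ≤ |P1| := by
    rw [abs_mul]
    calc |P1| * |s * b| ≤ |P1| * 1 := mul_le_mul_of_nonneg_left hsb (abs_nonneg _)
      _ = |P1| := mul_one _
  have hprod4 : |s * a * P2| ≤ |P2| := by
    rw [abs_mul]
    calc |s * a| * |P2| ≤ 1 * |P2| := mul_le_mul_of_nonneg_right hsa (abs_nonneg _)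
      _ = |P2| := one_mul _
  have hq3 : |q3| ≤ 1 + |P3| + (|P1| + |P2|)/2
      + ((|P1|+1)*(|P2|+2) + (|P1|+2)*(|P2|+1))/2 := by
    obtain ⟨hp1a, hp1b⟩ := abs_le.mp hprod1
    obtain ⟨hp2a, hp2b⟩ := abs_le.mp hprod2
    obtain ⟨hp3a, hp3b⟩ := abs_le.mp hprod3
    obtain ⟨hp4a, hp4b⟩ := abs_le.mp hprod4
    exact abs_le.mpr ⟨by linarith, by linarith⟩
  exact ⟨hq1.trans (key_bound1 _ _ _ hA0 hB0 hC0),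
    hq2.trans (key_bound2 _ _ _ hA0 hB0 hC0),
    hq3.trans (key_bound3 _ _ _ hA0 hB0 hC0)⟩

set_option maxHeartbeats 1000000 in
/-- A Heisenberg tube with horizontal unit direction is compact. -/
lemma hTube_isCompact (P : ℝ × ℝ × ℝ) {δ a b : ℝ} (hδ : 0 < δ) (hδ1 : δ ≤ 1)
    (hab : a ^ 2 + b ^ 2 = 1) : IsCompact (hTube δ P a b) := by
  classical
  set R : ℝ := (|P.1| + |P.2.1| + |P.2.2| + 3) ^ 2 with hRdef
  set box : Set (ℝ × ℝ × ℝ) :=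
    Set.Icc (-R) R ×ˢ (Set.Icc (-R) R ×ˢ Set.Icc (-R) R) with hboxdef
  have hboxc : IsCompact box := isCompact_Icc.prod (isCompact_Icc.prod isCompact_Icc)
  have hcont : Continuous fun x : ℝ × (ℝ × ℝ × ℝ) =>
      hDist x.2 (hMul P (x.1 * a, x.1 * b, 0)) := by
    unfold hDist hNorm hMul hInv
    apply Continuous.rpow_const
    · fun_prop
    · intro x; right; norm_num
  set S : Set (ℝ × (ℝ × ℝ × ℝ)) :=
    (Set.Icc (-(1/2) : ℝ) (1/2) ×ˢ box) ∩
      {x | hDist x.2 (hMul P (x.1 * a, x.1 * b, 0)) ≤ δ} with hSdef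
  have hSc : IsCompact S :=
    (isCompact_Icc.prod hboxc).inter_right (isClosed_le hcont continuous_const)
  have himg : hTube δ P a b = Prod.snd '' S := by
    ext q
    constructor
    · rintro ⟨s, hs, hd⟩
      have hd' : hNorm (hMul (hInv (hMul P (s * a, s * b, 0))) q) ≤ δ := hd
      obtain ⟨h1, h2, h3⟩ := hNorm_le_bounds _ hδ hδ1 hd'
      have e1 : (hMul (hInv (hMul P (s * a, s * b, 0))) q).1
          = q.1 - (P.1 + s * a) := by simp [hMul, hInv]; ring
      have e2 : (hMul (hInv (hMul P (s * a, s * b, 0))) q).2.1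
          = q.2.1 - (P.2.1 + s * b) := by simp [hMul, hInv]; ring
      have e3 : (hMul (hInv (hMul P (s * a, s * b, 0))) q).2.2
          = q.2.2 - (P.2.2 + (P.1 * (s * b) - s * a * P.2.1) / 2)
            + (-(P.1 + s * a) * q.2.1 + q.1 * (P.2.1 + s * b)) / 2 := by
        simp [hMul, hInv]; ring
      rw [e1] at h1; rw [e2] at h2; rw [e3] at h3
      obtain ⟨hb1, hb2, hb3⟩ := coord_bounds P.1 P.2.1 P.2.2 s a b q.1 q.2.1 q.2.2
        hs.1 hs.2 (by nlinarith [sq_nonneg b]) (by nlinarith [sq_nonneg a]) h1 h2 h3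
      obtain ⟨hc1, hc1'⟩ := abs_le.mp hb1
      obtain ⟨hc2, hc2'⟩ := abs_le.mp hb2
      obtain ⟨hc3, hc3'⟩ := abs_le.mp hb3
      exact ⟨(s, q), ⟨⟨hs, Set.mem_prod.mpr ⟨Set.mem_Icc.mpr ⟨hc1, hc1'⟩,
        Set.mem_prod.mpr ⟨Set.mem_Icc.mpr ⟨hc2, hc2'⟩,
          Set.mem_Icc.mpr ⟨hc3, hc3'⟩⟩⟩⟩, hd⟩, rfl⟩
    · rintro ⟨x, ⟨⟨hx1, _⟩, hd⟩, rfl⟩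
      exact ⟨x.1, hx1, hd⟩
  rw [himg]
  exact hSc.image continuous_snd

lemma tubeSum_nonneg (δ : ℝ) (𝒯 : Finset TubeData) (x : ℝ × ℝ × ℝ) :
    0 ≤ tubeSum δ 𝒯 x :=
  Finset.sum_nonneg fun T _ => Set.indicator_nonneg (fun _ _ => zero_le_one) x

lemma tubeSum_le_card (δ : ℝ) (𝒯 : Finset TubeData) (x : ℝ × ℝ × ℝ) :
    tubeSum δ 𝒯 x ≤ 𝒯.card := by
  classical
  have h : ∀ T ∈ 𝒯, Set.indicator (hTube δ T.1 T.2.1 T.2.2) (fun _ => (1:ℝ)) x ≤ 1 := by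
    intro T _
    by_cases hx : x ∈ hTube δ T.1 T.2.1 T.2.2 <;> simp [hx]
  calc tubeSum δ 𝒯 x ≤ 𝒯.card • (1:ℝ) := Finset.sum_le_card_nsmul _ _ _ h
    _ = 𝒯.card := by simp

lemma tubeSum_measurable {δ : ℝ} (hδ0 : 0 < δ) (hδ1 : δ ≤ 1) (𝒯 : Finset TubeData)
    (hdir : ∀ T ∈ 𝒯, T.2.1 ^ 2 + T.2.2 ^ 2 = 1) : Measurable (tubeSum δ 𝒯) := by
  unfold tubeSum
  exact Finset.measurable_sum _ fun T hT =>
    measurable_const.indicator ((hTube_isCompact T.1 hδ0 hδ1 (hdir T hT)).isClosed.measurableSet)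

lemma exists_union {δ : ℝ} (hδ0 : 0 < δ) (hδ1 : δ ≤ 1) (𝒯 : Finset TubeData)
    (hdir : ∀ T ∈ 𝒯, T.2.1 ^ 2 + T.2.2 ^ 2 = 1) {c : ℝ} (hc : 0 < c)
    {B : Set (ℝ × ℝ × ℝ)} (hB : ∀ x ∈ B, c ≤ tubeSum δ 𝒯 x) :
    ∃ U : Set (ℝ × ℝ × ℝ), IsCompact U ∧ MeasurableSet U ∧ B ⊆ U ∧
      ∀ x ∉ U, tubeSum δ 𝒯 x = 0 := by
  classical
  have hzero : ∀ x ∉ ⋃ T ∈ (↑𝒯 : Set TubeData), hTube δ T.1 T.2.1 T.2.2,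
      tubeSum δ 𝒯 x = 0 := by
    intro x hx
    apply Finset.sum_eq_zero
    intro T hT
    apply Set.indicator_of_notMem
    intro hmem
    exact hx (Set.mem_biUnion (by exact_mod_cast hT) hmem)
  refine ⟨⋃ T ∈ (↑𝒯 : Set TubeData), hTube δ T.1 T.2.1 T.2.2, ?_, ?_, ?_, hzero⟩
  · exact 𝒯.finite_toSet.isCompact_biUnion fun T hT =>
      hTube_isCompact T.1 hδ0 hδ1 (hdir T (by exact_mod_cast hT))
  · exact (𝒯.finite_toSet.isCompact_biUnion fun T hT =>
      hTube_isCompact T.1 hδ0 hδ1 (hdir T (by exact_mod_cast hT))).isClosed.measurableSet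
  · intro x hx
    by_contra hxU
    have := hzero x hxU
    have := hB x hx
    linarith

set_option maxHeartbeats 1000000

/-- If the bilinear Heisenberg Kakeya inequality with exponent p holds for all
transversal pairs of families of Heisenberg δ-tubes, and there exist families of
∼δ⁻³ tubes each of whose counting function dominates a fixed ball of positive
measure, then p ≥ 2/3. -/
theorem bilinear_exponent_lower_bound
    (p C c c₀ c₁ c₂ : ℝ) (hp : 0 < p) (hC : 0 < C) (hc : 0 < c)
    (hc₀ : 0 < c₀) (hc₁ : 0 < c₁) (hc₂ : 0 < c₂)
    (B : Set (ℝ × ℝ × ℝ)) (hBmeas : MeasurableSet B) (hBpos : 0 < volume B)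
    (H1 : ∀ δ ∈ Set.Ioo (0 : ℝ) 1, ∀ 𝒯₁ 𝒯₂ : Finset TubeData,
      (∀ T ∈ 𝒯₁, T.2.1 ^ 2 + T.2.2 ^ 2 = 1 ∧
        Real.sqrt ((T.2.1 - 1) ^ 2 + T.2.2 ^ 2) ≤ c₀) →
      (∀ T ∈ 𝒯₂, T.2.1 ^ 2 + T.2.2 ^ 2 = 1 ∧
        Real.sqrt (T.2.1 ^ 2 + (T.2.2 - 1) ^ 2) ≤ c₀) →
      ∫ x : ℝ × ℝ × ℝ, (tubeSum δ 𝒯₁ x) ^ p * (tubeSum δ 𝒯₂ x) ^ p ≤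
        C * δ ^ 4 * ((𝒯₁.card : ℝ) ^ p * (𝒯₂.card : ℝ) ^ p +
          (𝒯₁.card : ℝ) + (𝒯₂.card : ℝ)))
    (H2 : ∀ δ ∈ Set.Ioo (0 : ℝ) 1, ∃ 𝒯₁ 𝒯₂ : Finset TubeData,
      (∀ T ∈ 𝒯₁, T.2.1 ^ 2 + T.2.2 ^ 2 = 1 ∧
        Real.sqrt ((T.2.1 - 1) ^ 2 + T.2.2 ^ 2) ≤ c₀) ∧
      (∀ T ∈ 𝒯₂, T.2.1 ^ 2 + T.2.2 ^ 2 = 1 ∧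
        Real.sqrt (T.2.1 ^ 2 + (T.2.2 - 1) ^ 2) ≤ c₀) ∧
      c₁ * δ⁻¹ ^ 3 ≤ (𝒯₁.card : ℝ) ∧ (𝒯₁.card : ℝ) ≤ c₂ * δ⁻¹ ^ 3 ∧
      c₁ * δ⁻¹ ^ 3 ≤ (𝒯₂.card : ℝ) ∧ (𝒯₂.card : ℝ) ≤ c₂ * δ⁻¹ ^ 3 ∧
      (∀ x ∈ B, c ≤ tubeSum δ 𝒯₁ x) ∧ (∀ x ∈ B, c ≤ tubeSum δ 𝒯₂ x)) :
    (2 : ℝ) / 3 ≤ p := by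
  classical
  by_contra hcon
  push_neg at hcon
  have he : 0 < 4 - 6 * p := by linarith
  -- volume of B is finite
  obtain ⟨𝒯₁', 𝒯₂', hd1', _, _, _, _, _, hB1', _⟩ := H2 (1/2) (by norm_num)
  obtain ⟨U', hU'c, _, hBU', _⟩ :=
    exists_union (by norm_num : (0:ℝ) < 1/2) (by norm_num) 𝒯₁'
      (fun T hT => (hd1' T hT).1) hc hB1'
  have hBfin : volume B < ⊤ := lt_of_le_of_lt (measure_mono hBU') hU'c.measure_lt_top
  set K : ℝ := (volume B).toReal * (c ^ p * c ^ p) with hKdef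
  have hK0 : 0 < K := by
    apply mul_pos (ENNReal.toReal_pos hBpos.ne' hBfin.ne)
    exact mul_pos (Real.rpow_pos_of_pos hc p) (Real.rpow_pos_of_pos hc p)
  -- the key inequality for every δ ∈ (0,1)
  have key : ∀ δ ∈ Set.Ioo (0:ℝ) 1,
      K ≤ C * (c₂ ^ p * c₂ ^ p) * δ ^ (4 - 6 * p) + 2 * C * c₂ * δ := by
    rintro δ ⟨hδ0, hδ1⟩
    obtain ⟨𝒯₁, 𝒯₂, hd1, hd2, h1l, h1u, h2l, h2u, hB1, hB2⟩ := H2 δ ⟨hδ0, hδ1⟩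
    have hint := H1 δ ⟨hδ0, hδ1⟩ 𝒯₁ 𝒯₂ hd1 hd2
    obtain ⟨U₁, hU1c, hU1m, hBU1, hU1z⟩ :=
      exists_union hδ0 hδ1.le 𝒯₁ (fun T hT => (hd1 T hT).1) hc hB1
    have hm1 : Measurable (tubeSum δ 𝒯₁) :=
      tubeSum_measurable hδ0 hδ1.le 𝒯₁ fun T hT => (hd1 T hT).1
    have hm2 : Measurable (tubeSum δ 𝒯₂) :=
      tubeSum_measurable hδ0 hδ1.le 𝒯₂ fun T hT => (hd2 T hT).1
    set f : (ℝ × ℝ × ℝ) → ℝ :=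
      fun x => (tubeSum δ 𝒯₁ x) ^ p * (tubeSum δ 𝒯₂ x) ^ p with hfdef
    have hfm : Measurable f :=
      ((Real.continuous_rpow_const hp.le).measurable.comp hm1).mul
        ((Real.continuous_rpow_const hp.le).measurable.comp hm2)
    have hfnn : ∀ x, 0 ≤ f x := fun x =>
      mul_nonneg (Real.rpow_nonneg (tubeSum_nonneg _ _ _) _)
        (Real.rpow_nonneg (tubeSum_nonneg _ _ _) _)
    set M : ℝ := (𝒯₁.card : ℝ) ^ p * (𝒯₂.card : ℝ) ^ p with hMdef
    have hfb : ∀ x, f x ≤ Set.indicator U₁ (fun _ => M) x := by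
      intro x
      by_cases hx : x ∈ U₁
      · rw [Set.indicator_of_mem hx]
        exact mul_le_mul
          (Real.rpow_le_rpow (tubeSum_nonneg _ _ _) (tubeSum_le_card _ _ _) hp.le)
          (Real.rpow_le_rpow (tubeSum_nonneg _ _ _) (tubeSum_le_card _ _ _) hp.le)
          (Real.rpow_nonneg (tubeSum_nonneg _ _ _) _)
          (Real.rpow_nonneg (Nat.cast_nonneg _) _)
      · rw [Set.indicator_of_notMem hx]
        show (tubeSum δ 𝒯₁ x) ^ p * (tubeSum δ 𝒯₂ x) ^ p ≤ 0
        rw [hU1z x hx, Real.zero_rpow hp.ne', zero_mul]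
    have hgi : Integrable (Set.indicator U₁ fun _ => M) := by
      rw [integrable_indicator_iff hU1m]
      exact integrableOn_const hU1c.measure_lt_top.ne
    have hfi : Integrable f := by
      apply hgi.mono' hfm.aestronglyMeasurable
      refine Filter.Eventually.of_forall fun x => ?_
      rw [Real.norm_of_nonneg (hfnn x)]
      exact hfb x
    have hgl : Integrable (Set.indicator B fun _ => c ^ p * c ^ p) := by
      rw [integrable_indicator_iff hBmeas]
      exact integrableOn_const hBfin.ne
    have hlow : ∀ x, Set.indicator B (fun _ => c ^ p * c ^ p) x ≤ f x := by
      intro x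
      by_cases hx : x ∈ B
      · rw [Set.indicator_of_mem hx]
        exact mul_le_mul (Real.rpow_le_rpow hc.le (hB1 x hx) hp.le)
          (Real.rpow_le_rpow hc.le (hB2 x hx) hp.le)
          (Real.rpow_nonneg hc.le _)
          (Real.rpow_nonneg (tubeSum_nonneg _ _ _) _)
      · rw [Set.indicator_of_notMem hx]; exact hfnn x
    have hKle : K ≤ ∫ x, f x := by
      have h := integral_mono hgl hfi hlow
      rwa [integral_indicator_const _ hBmeas, smul_eq_mul] at h
    have hchain : K ≤ C * δ ^ 4 *
        ((𝒯₁.card : ℝ) ^ p * (𝒯₂.card : ℝ) ^ p + 𝒯₁.card + 𝒯₂.card) :=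
      hKle.trans hint
    -- rpow algebra
    have hinv3 : (δ⁻¹ : ℝ) ^ (3:ℕ) = δ ^ ((-3 : ℝ)) := by
      rw [Real.rpow_neg hδ0.le, show ((3:ℝ)) = ((3:ℕ):ℝ) by norm_num,
        Real.rpow_natCast, inv_pow]
    have hfac : (c₂ * δ⁻¹ ^ 3) ^ p = c₂ ^ p * δ ^ ((-3) * p) := by
      rw [hinv3, Real.mul_rpow hc₂.le (Real.rpow_nonneg hδ0.le _),
        ← Real.rpow_mul hδ0.le]
    have hcard1 : (𝒯₁.card : ℝ) ^ p ≤ c₂ ^ p * δ ^ ((-3) * p) := by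
      rw [← hfac]; exact Real.rpow_le_rpow (Nat.cast_nonneg _) h1u hp.le
    have hcard2 : (𝒯₂.card : ℝ) ^ p ≤ c₂ ^ p * δ ^ ((-3) * p) := by
      rw [← hfac]; exact Real.rpow_le_rpow (Nat.cast_nonneg _) h2u hp.le
    have hprod : (𝒯₁.card : ℝ) ^ p * (𝒯₂.card : ℝ) ^ p ≤
        (c₂ ^ p * δ ^ ((-3) * p)) * (c₂ ^ p * δ ^ ((-3) * p)) :=
      mul_le_mul hcard1 hcard2 (Real.rpow_nonneg (Nat.cast_nonneg _) _)
        (by positivity)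
    have e1 : δ ^ (4:ℕ) * (δ ^ ((-3) * p) * δ ^ ((-3) * p)) = δ ^ (4 - 6 * p) := by
      rw [show (4 - 6 * p : ℝ) = ((4:ℕ):ℝ) + ((-3) * p + (-3) * p) by push_cast; ring,
        Real.rpow_add hδ0, Real.rpow_add hδ0, Real.rpow_natCast]
    have e2 : δ ^ (4:ℕ) * δ⁻¹ ^ (3:ℕ) = δ := by
      field_simp
    have hRHS : C * δ ^ 4 *
        ((𝒯₁.card : ℝ) ^ p * (𝒯₂.card : ℝ) ^ p + 𝒯₁.card + 𝒯₂.card) ≤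
        C * (c₂ ^ p * c₂ ^ p) * δ ^ (4 - 6 * p) + 2 * C * c₂ * δ := by
      have step1 : C * δ ^ 4 *
          ((𝒯₁.card : ℝ) ^ p * (𝒯₂.card : ℝ) ^ p + 𝒯₁.card + 𝒯₂.card) ≤
          C * δ ^ 4 * ((c₂ ^ p * δ ^ ((-3) * p)) * (c₂ ^ p * δ ^ ((-3) * p))
            + c₂ * δ⁻¹ ^ 3 + c₂ * δ⁻¹ ^ 3) := by
        apply mul_le_mul_of_nonneg_left _ (by positivity : (0:ℝ) ≤ C * δ ^ 4)
        linarith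
      have step2 : C * δ ^ 4 * ((c₂ ^ p * δ ^ ((-3) * p)) * (c₂ ^ p * δ ^ ((-3) * p))
            + c₂ * δ⁻¹ ^ 3 + c₂ * δ⁻¹ ^ 3) =
          C * (c₂ ^ p * c₂ ^ p) * δ ^ (4 - 6 * p) + 2 * C * c₂ * δ := by
        linear_combination C * (c₂ ^ p * c₂ ^ p) * e1 + 2 * C * c₂ * e2
      linarith
    exact hchain.trans hRHS
  -- choose a small δ to derive a contradiction
  set A : ℝ := C * (c₂ ^ p * c₂ ^ p) with hAdef
  have hA0 : 0 < A :=
    mul_pos hC (mul_pos (Real.rpow_pos_of_pos hc₂ p) (Real.rpow_pos_of_pos hc₂ p))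
  set Bc : ℝ := 2 * C * c₂ with hBcdef
  have hBc0 : 0 < Bc := by positivity
  set δ₁ : ℝ := (K / (4 * A)) ^ ((4 - 6 * p)⁻¹) with hδ₁def
  have hδ₁0 : 0 < δ₁ := Real.rpow_pos_of_pos (by positivity) _
  set δ₂ : ℝ := K / (4 * Bc) with hδ₂def
  have hδ₂0 : 0 < δ₂ := by positivity
  set δ₀ : ℝ := min (1/2) (min δ₁ δ₂) with hδ₀def
  have hδ₀0 : 0 < δ₀ := lt_min (by norm_num) (lt_min hδ₁0 hδ₂0)
  have hδ₀1 : δ₀ < 1 := lt_of_le_of_lt (min_le_left _ _) (by norm_num)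
  have hkey := key δ₀ ⟨hδ₀0, hδ₀1⟩
  have t1 : A * δ₀ ^ (4 - 6 * p) ≤ K / 4 := by
    have h1 : δ₀ ≤ δ₁ := le_trans (min_le_right _ _) (min_le_left _ _)
    have h2 : δ₀ ^ (4 - 6 * p) ≤ δ₁ ^ (4 - 6 * p) :=
      Real.rpow_le_rpow hδ₀0.le h1 he.le
    have h3 : δ₁ ^ (4 - 6 * p) = K / (4 * A) := by
      rw [hδ₁def]
      exact Real.rpow_inv_rpow (by positivity) he.ne'
    calc A * δ₀ ^ (4 - 6 * p) ≤ A * (K / (4 * A)) := by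
          rw [← h3]; exact mul_le_mul_of_nonneg_left h2 hA0.le
      _ = K / 4 := by field_simp
  have t2 : Bc * δ₀ ≤ K / 4 := by
    have h1 : δ₀ ≤ δ₂ := le_trans (min_le_right _ _) (min_le_right _ _)
    calc Bc * δ₀ ≤ Bc * (K / (4 * Bc)) := mul_le_mul_of_nonneg_left h1 hBc0.le
      _ = K / 4 := by field_simp
  linarith
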